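/- Let A, B, C, D, E be real numbers with C < 0, B ≤ 0, A ≠ 0, A + B ≤ 0, Δ := B² C² + A C (A E − B D) ≥ 0, and suppose C x² + D x + E ≠ 0 for all x ∈ [0,1]. Define f(x) = (A x + B)/(C x² + D x + E) and r = (−B C + √Δ)/(A C). Then f is monotone nondecreasing on [0,1] ∩ (−∞, r] and monotone nonincreasing on [0,1] ∩ [r, ∞). -/

import Mathlib

noncomputable section

/-- Unimodality: f is nondecreasing left of r and nonincreasing right of r on [0,1]. -/
theorem stmt9 (A B C D E : ℝ)
    (hC : C < 0) (hB : B ≤ 0) (hA : A ≠ 0) (hAB : A + B ≤ 0)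
    (hΔ : 0 ≤ B ^ 2 * C ^ 2 + A * C * (A * E - B * D))
    (hden : ∀ x ∈ Set.Icc (0 : ℝ) 1, C * x ^ 2 + D * x + E ≠ 0) :
    let f : ℝ → ℝ := fun x => (A * x + B) / (C * x ^ 2 + D * x + E)
    let r := (-(B * C) + Real.sqrt (B ^ 2 * C ^ 2 + A * C * (A * E - B * D))) / (A * C)
    MonotoneOn f (Set.Icc (0 : ℝ) 1 ∩ Set.Iic r) ∧
    AntitoneOn f (Set.Icc (0 : ℝ) 1 ∩ Set.Ici r) := by
  intro f r
  set s := Real.sqrt (B ^ 2 * C ^ 2 + A * C * (A * E - B * D)) with hs_def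
  have hs2 : s ^ 2 = B ^ 2 * C ^ 2 + A * C * (A * E - B * D) := Real.sq_sqrt hΔ
  have hsnn : 0 ≤ s := Real.sqrt_nonneg _
  have hAC : A * C ≠ 0 := mul_ne_zero hA (ne_of_lt hC)
  have hrAC : r * (A * C) = -(B * C) + s := div_mul_cancel₀ _ hAC
  have hBC : 0 ≤ B * C := by nlinarith
  -- sign of M(x) = -(A*C)x² - 2BCx + (AE - BD)
  have hM1 : ∀ x ∈ Set.Icc (0:ℝ) 1, x ≤ r →
      0 ≤ -(A*C)*x^2 - 2*(B*C)*x + (A*E - B*D) := by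
    intro x hx hxr
    obtain ⟨hx0, hx1⟩ := hx
    rcases hAC.lt_or_gt with hlt | hgt
    · -- A*C < 0 : x ≤ r means A*C*x + B*C ≥ s
      have h1 : -(B*C) + s ≤ A*C*x := by nlinarith [mul_le_mul_of_nonpos_left hxr hlt.le]
      nlinarith [sq_nonneg (A*C*x + B*C)]
    · -- A*C > 0 : u = ACx+BC ∈ [BC, s], BC ≥ 0
      have h1 : A*C*x ≤ -(B*C) + s := by nlinarith [mul_le_mul_of_nonneg_left hxr hgt.le]
      have h2 : 0 ≤ A*C*x + B*C := by positivity
      nlinarith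
  have hM2 : ∀ x ∈ Set.Icc (0:ℝ) 1, r ≤ x →
      -(A*C)*x^2 - 2*(B*C)*x + (A*E - B*D) ≤ 0 := by
    intro x hx hxr
    obtain ⟨hx0, hx1⟩ := hx
    rcases hAC.lt_or_gt with hlt | hgt
    · -- A*C < 0 : r ≤ x means u = ACx+BC ≤ s; also u ≥ AC+BC = C(A+B) ≥ 0
      have h1 : A*C*x ≤ -(B*C) + s := by nlinarith [mul_le_mul_of_nonpos_left hxr hlt.le]
      have h2 : 0 ≤ A*C*x + B*C := by
        nlinarith [mul_le_mul_of_nonpos_left hx1 hlt.le,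
          mul_nonneg (neg_nonneg.2 hC.le) (neg_nonneg.2 hAB)]
      nlinarith [mul_nonneg (by linarith : (0:ℝ) ≤ s - (A*C*x + B*C))
        (by linarith : (0:ℝ) ≤ s + (A*C*x + B*C))]
    · have h1 : -(B*C) + s ≤ A*C*x := by nlinarith [mul_le_mul_of_nonneg_left hxr hgt.le]
      have h2 : 0 ≤ A*C*x + B*C := by positivity
      nlinarith [mul_nonneg (by linarith : (0:ℝ) ≤ (A*C*x + B*C) - s)
        (by linarith : (0:ℝ) ≤ (A*C*x + B*C) + s)]
  -- derivative of f
  have hderiv : ∀ x ∈ Set.Icc (0:ℝ) 1,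
      HasDerivAt f ((-(A*C)*x^2 - 2*(B*C)*x + (A*E - B*D)) / (C*x^2+D*x+E)^2) x := by
    intro x hx
    have h1 : HasDerivAt (fun y : ℝ => A*y + B) A x := by
      simpa using ((hasDerivAt_id x).const_mul A).add_const B
    have h2 : HasDerivAt (fun y : ℝ => C*y^2 + D*y + E) (2*C*x + D) x := by
      have := (((hasDerivAt_pow 2 x).const_mul C).add ((hasDerivAt_id x).const_mul D)).add_const E
      simpa using this.congr_deriv (by ring)
    have := h1.div h2 (hden x hx)
    refine this.congr_deriv ?_
    ring
  have hcont : ContinuousOn f (Set.Icc (0:ℝ) 1) := by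
    apply ContinuousOn.div
    · fun_prop
    · fun_prop
    · exact hden
  constructor
  · apply monotoneOn_of_deriv_nonneg ((convex_Icc (0:ℝ) 1).inter (convex_Iic r))
      (hcont.mono Set.inter_subset_left)
    · intro x hx
      have hx' : x ∈ Set.Icc (0:ℝ) 1 ∩ Set.Iic r := interior_subset hx
      exact (hderiv x hx'.1).differentiableAt.differentiableWithinAt
    · intro x hx
      have hx' : x ∈ Set.Icc (0:ℝ) 1 ∩ Set.Iic r := interior_subset hx
      rw [(hderiv x hx'.1).deriv]
      exact div_nonneg (hM1 x hx'.1 hx'.2) (sq_nonneg _)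
  · apply antitoneOn_of_deriv_nonpos ((convex_Icc (0:ℝ) 1).inter (convex_Ici r))
      (hcont.mono Set.inter_subset_left)
    · intro x hx
      have hx' : x ∈ Set.Icc (0:ℝ) 1 ∩ Set.Ici r := interior_subset hx
      exact (hderiv x hx'.1).differentiableAt.differentiableWithinAt
    · intro x hx
      have hx' : x ∈ Set.Icc (0:ℝ) 1 ∩ Set.Ici r := interior_subset hx
      rw [(hderiv x hx'.1).deriv]
      exact div_nonpos_of_nonpos_of_nonneg (hM2 x hx'.1 hx'.2) (sq_nonneg _)
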